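/- arXiv:2412.09882 — 3 statements merged into one kernel-verified Lean document; each statement's English description precedes it below -/
import Mathlib

section
/- Let d ≥ 1 and let μ_d be the measure r^{d−1}dr on (0,∞). Define R_1 f(r) = χ_{[2,∞)}(r) · sup_{t∈[1,2], t≤r/2} ∫_{r−t}^{r+t} |f(s)| ds. Then R_1 is bounded from L^p(μ_d) to L^q(μ_d) for all 1 ≤ p ≤ q ≤ ∞. -/
open Set MeasureTheory
open scoped ENNReal NNReal

noncomputable section

/-- The measure `μ_d` on `(0,∞)` with density `r^{d-1}`. -/
def mud (d : ℕ) : Measure ℝ :=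
  (volume.restrict (Ioi (0 : ℝ))).withDensity fun r => ENNReal.ofReal (r ^ (d - 1))

/-- The `L^p(μ)` norm of an `ℝ≥0∞`-valued function (with `p = ∞` meaning the
essential supremum). -/
def lpNormE (μ : Measure ℝ) (p : ℝ≥0∞) (g : ℝ → ℝ≥0∞) : ℝ≥0∞ :=
  if p = ∞ then essSup g μ else (∫⁻ r, g r ^ p.toReal ∂μ) ^ (1 / p.toReal)

/-- `R₁ f(r) = χ_{[2,∞)}(r) · sup_{t∈[1,2], t ≤ r/2} ∫_{r−t}^{r+t} |f(s)| ds`. -/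
def R1 (f : ℝ → ℝ) (r : ℝ) : ℝ≥0∞ :=
  if 2 ≤ r then
    ⨆ t ∈ {t : ℝ | t ∈ Icc (1 : ℝ) 2 ∧ t ≤ r / 2},
      ∫⁻ s in Icc (r - t) (r + t), ENNReal.ofReal |f s|
  else 0

namespace R1aux

lemma wR_meas (d : ℕ) : Measurable fun r : ℝ => ENNReal.ofReal (r ^ (d - 1)) :=
  (measurable_id.pow_const _).ennreal_ofReal

instance (d : ℕ) : SFinite (mud d) := by unfold mud; infer_instance

lemma volIoi_ac (d : ℕ) : volume.restrict (Ioi (0 : ℝ)) ≪ mud d := by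
  refine Measure.AbsolutelyContinuous.mk fun E hE h0 => ?_
  rw [mud, withDensity_apply_eq_zero (wR_meas d)] at h0
  have hsub : E ∩ Ioi 0 ⊆ {x : ℝ | ENNReal.ofReal (x ^ (d - 1)) ≠ 0} ∩ E := by
    intro x hx
    refine ⟨?_, hx.1⟩
    simp only [mem_setOf_eq, ne_eq, ENNReal.ofReal_eq_zero, not_le]
    exact pow_pos hx.2 _
  have h1 : (volume.restrict (Ioi 0)) (E ∩ Ioi 0) = 0 := measure_mono_null hsub h0
  rw [Measure.restrict_apply (hE.inter measurableSet_Ioi), inter_assoc, inter_self] at h1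
  rw [Measure.restrict_apply hE]
  exact h1

lemma Ici_subset_Ioi : Ici (1 : ℝ) ⊆ Ioi 0 := fun x hx => show (0:ℝ) < x from lt_of_lt_of_le one_pos hx

lemma lintegral_le_mud (d : ℕ) {h : ℝ → ℝ≥0∞} (hm : Measurable h)
    {A : Set ℝ} (hA : A ⊆ Ici 1) :
    ∫⁻ s in A, h s ∂volume ≤ ∫⁻ s, h s ∂(mud d) := by
  rw [mud, lintegral_withDensity_eq_lintegral_mul _ (wR_meas d) hm]
  calc ∫⁻ s in A, h s ∂volume
      ≤ ∫⁻ s in A, ENNReal.ofReal (s ^ (d - 1)) * h s ∂volume := by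
        refine setLIntegral_mono ((wR_meas d).mul hm) fun x hx => ?_
        have h1 : (1 : ℝ≥0∞) ≤ ENNReal.ofReal (x ^ (d - 1)) :=
          ENNReal.one_le_ofReal.2 (one_le_pow₀ (hA hx))
        calc h x = 1 * h x := (one_mul _).symm
          _ ≤ _ := mul_le_mul_left h1 _
    _ ≤ ∫⁻ s in Ioi 0, ENNReal.ofReal (s ^ (d - 1)) * h s ∂volume :=
        lintegral_mono_set (hA.trans Ici_subset_Ioi)
    _ = _ := by rfl

lemma vol_Icc4 (a : ℝ) : volume (Icc (a - 2) (a + 2)) = 4 := by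
  rw [Real.volume_Icc, show a + 2 - (a - 2) = (4 : ℝ) by ring]
  simp [ENNReal.ofReal_ofNat]

lemma volS (r : ℝ) : volume (Icc (r - 2) (r + 2) ∩ Ici 1) ≤ 4 :=
  le_trans (measure_mono inter_subset_left) (le_of_eq (vol_Icc4 r))

lemma holder_le {pR : ℝ} (hp : 1 ≤ pR) {h : ℝ → ℝ≥0∞} (hm : Measurable h)
    {A : Set ℝ} (hA4 : volume A ≤ 4) :
    ∫⁻ s in A, h s ∂volume ≤ (∫⁻ s in A, h s ^ pR ∂volume) ^ (1 / pR) * 4 := by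
  rcases eq_or_lt_of_le hp with heq | hlt
  · simp only [← heq, ENNReal.rpow_one, one_div_one]
    exact le_mul_of_one_le_right (zero_le) (by norm_num)
  · have hc := Real.HolderConjugate.conjExponent hlt
    set qR := Real.conjExponent pR with hq
    have hH := ENNReal.lintegral_mul_le_Lp_mul_Lq (volume.restrict A) hc hm.aemeasurable
      (aemeasurable_const (b := (1 : ℝ≥0∞)))
    simp only [Pi.mul_apply, mul_one, ENNReal.one_rpow, lintegral_const,
      Measure.restrict_apply_univ, one_mul] at hH
    refine hH.trans (mul_le_mul_right ?_ _)
    calc (volume A) ^ (1 / qR) ≤ (4 : ℝ≥0∞) ^ (1 / qR) :=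
          ENNReal.rpow_le_rpow hA4 hc.symm.one_div_nonneg
      _ ≤ (4 : ℝ≥0∞) ^ (1 : ℝ) := by
          refine ENNReal.rpow_le_rpow_of_exponent_le (by norm_num) ?_
          rw [div_le_one hc.symm.pos]
          exact hc.symm.lt.le
      _ = 4 := ENNReal.rpow_one 4

lemma holder_pow {pR : ℝ} (hp : 1 ≤ pR) {h : ℝ → ℝ≥0∞} (hm : Measurable h)
    {A : Set ℝ} (hA4 : volume A ≤ 4) :
    (∫⁻ s in A, h s ∂volume) ^ pR ≤ 4 ^ pR * ∫⁻ s in A, h s ^ pR ∂volume := by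
  have h0 : (0 : ℝ) ≤ pR := by linarith
  calc (∫⁻ s in A, h s ∂volume) ^ pR
      ≤ ((∫⁻ s in A, h s ^ pR ∂volume) ^ (1 / pR) * 4) ^ pR :=
        ENNReal.rpow_le_rpow (holder_le hp hm hA4) h0
    _ = (∫⁻ s in A, h s ^ pR ∂volume) * 4 ^ pR := by
        rw [ENNReal.mul_rpow_of_nonneg _ _ h0, ← ENNReal.rpow_mul,
          one_div_mul_cancel (by linarith : pR ≠ 0), ENNReal.rpow_one]
    _ = _ := mul_comm _ _

lemma R1_le (f : ℝ → ℝ) {r : ℝ} (hr : 2 ≤ r) :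
    R1 f r ≤ ∫⁻ s in Icc (r - 2) (r + 2) ∩ Ici 1, ENNReal.ofReal |f s| ∂volume := by
  rw [R1, if_pos hr]
  refine iSup_le fun t => iSup_le fun ht => lintegral_mono_set fun s hs => ?_
  obtain ⟨⟨ht1, ht2⟩, htr⟩ := ht
  rw [mem_Icc] at hs
  obtain ⟨hs1, hs2⟩ := hs
  refine ⟨⟨by linarith, by linarith⟩, ?_⟩
  show (1 : ℝ) ≤ s
  linarith

lemma pt_bound (d : ℕ) {pR : ℝ} (hp : 1 ≤ pR) {f : ℝ → ℝ} (hf : Measurable f) (r : ℝ) :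
    R1 f r ≤ 4 * (∫⁻ s, ENNReal.ofReal |f s| ^ pR ∂(mud d)) ^ (1 / pR) := by
  by_cases hr : 2 ≤ r
  · have hFm : Measurable fun s => ENNReal.ofReal |f s| := hf.abs.ennreal_ofReal
    calc R1 f r ≤ ∫⁻ s in Icc (r - 2) (r + 2) ∩ Ici 1, ENNReal.ofReal |f s| ∂volume :=
          R1_le f hr
      _ ≤ (∫⁻ s in Icc (r - 2) (r + 2) ∩ Ici 1, ENNReal.ofReal |f s| ^ pR ∂volume) ^ (1 / pR)
            * 4 := holder_le hp hFm (volS r)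
      _ ≤ (∫⁻ s, ENNReal.ofReal |f s| ^ pR ∂(mud d)) ^ (1 / pR) * 4 := by
          refine mul_le_mul_left (ENNReal.rpow_le_rpow ?_ (by positivity)) _
          exact lintegral_le_mud d (hFm.pow_const pR) inter_subset_right
      _ = _ := mul_comm _ _
  · rw [R1, if_neg hr]
    exact zero_le

lemma mud_Icc_le (d : ℕ) {s : ℝ} (hs : 1 ≤ s) :
    (mud d) (Icc (s - 2) (s + 2)) ≤ 4 * 3 ^ (d - 1) * ENNReal.ofReal (s ^ (d - 1)) := by
  rw [mud, withDensity_apply _ measurableSet_Icc, Measure.restrict_restrict measurableSet_Icc]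
  calc ∫⁻ x in Icc (s - 2) (s + 2) ∩ Ioi 0, ENNReal.ofReal (x ^ (d - 1)) ∂volume
      ≤ ∫⁻ _ in Icc (s - 2) (s + 2) ∩ Ioi 0, ENNReal.ofReal ((3 * s) ^ (d - 1)) ∂volume := by
        refine setLIntegral_mono measurable_const fun x hx => ?_
        obtain ⟨⟨_, hx2⟩, hx0⟩ := hx
        exact ENNReal.ofReal_le_ofReal (pow_le_pow_left₀ hx0.le (by linarith) _)
    _ = ENNReal.ofReal ((3 * s) ^ (d - 1)) * volume (Icc (s - 2) (s + 2) ∩ Ioi 0) :=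
        setLIntegral_const _ _
    _ ≤ ENNReal.ofReal ((3 * s) ^ (d - 1)) * 4 := by
        refine mul_le_mul_right ?_ _
        exact le_trans (measure_mono inter_subset_left) (le_of_eq (vol_Icc4 s))
    _ = 4 * 3 ^ (d - 1) * ENNReal.ofReal (s ^ (d - 1)) := by
        rw [mul_pow, ENNReal.ofReal_mul (by positivity),
          ENNReal.ofReal_pow (by norm_num : (0 : ℝ) ≤ 3), ENNReal.ofReal_ofNat]
        ring

lemma tonelli (d : ℕ) {h : ℝ → ℝ≥0∞} (hm : Measurable h) :
    ∫⁻ r, (∫⁻ s in Icc (r - 2) (r + 2) ∩ Ici 1, h s ∂volume) ∂(mud d)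
      ≤ 4 * 3 ^ (d - 1) * ∫⁻ s, h s ∂(mud d) := by
  set K : ℝ≥0∞ := 4 * 3 ^ (d - 1) with hK
  have hKne : K ≠ ∞ := ENNReal.mul_ne_top (by norm_num) (ENNReal.pow_ne_top (by norm_num))
  set k : ℝ → ℝ → ℝ≥0∞ := fun r s => (Icc (r - 2) (r + 2) ∩ Ici 1).indicator h s with hk
  have hSm : ∀ r : ℝ, MeasurableSet (Icc (r - 2) (r + 2) ∩ Ici (1 : ℝ)) :=
    fun r => measurableSet_Icc.inter measurableSet_Ici
  have h1 : ∀ r : ℝ, ∫⁻ s in Icc (r - 2) (r + 2) ∩ Ici 1, h s ∂volume = ∫⁻ s, k r s ∂volume :=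
    fun r => (lintegral_indicator (hSm r) h).symm
  have hkm : Measurable (Function.uncurry k) := by
    have hE : MeasurableSet {p : ℝ × ℝ | p.1 - 2 ≤ p.2 ∧ p.2 ≤ p.1 + 2 ∧ 1 ≤ p.2} := by
      rw [setOf_and, setOf_and]
      exact (measurableSet_le (measurable_fst.sub measurable_const) measurable_snd).inter
        ((measurableSet_le measurable_snd (measurable_fst.add measurable_const)).inter
          (measurableSet_le measurable_const measurable_snd))
    have heq : Function.uncurry k
        = Set.indicator {p : ℝ × ℝ | p.1 - 2 ≤ p.2 ∧ p.2 ≤ p.1 + 2 ∧ 1 ≤ p.2}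
            (fun p => h p.2) := by
      funext p
      simp [Function.uncurry, hk, Set.indicator_apply, mem_inter_iff, mem_Icc, mem_Ici,
        and_assoc]
    rw [heq]
    exact (hm.comp measurable_snd).indicator hE
  calc ∫⁻ r, (∫⁻ s in Icc (r - 2) (r + 2) ∩ Ici 1, h s ∂volume) ∂(mud d)
      = ∫⁻ s, ∫⁻ r, k r s ∂(mud d) ∂volume := by
        simp_rw [h1]
        exact lintegral_lintegral_swap hkm.aemeasurable
    _ = ∫⁻ s, (Ici 1).indicator h s * (mud d) (Icc (s - 2) (s + 2)) ∂volume := by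
        refine lintegral_congr fun s => ?_
        have hks : ∀ r, k r s
            = (Icc (s - 2) (s + 2)).indicator (fun _ => (Ici 1).indicator h s) r := by
          intro r
          by_cases hmem : s ∈ Icc (r - 2) (r + 2) ∩ Ici 1
          · rw [show k r s = h s from indicator_of_mem hmem h]
            obtain ⟨hs1, hs2⟩ := hmem
            rw [mem_Icc] at hs1
            have h2 : r ∈ Icc (s - 2) (s + 2) := by
              rw [mem_Icc]; constructor <;> linarith [hs1.1, hs1.2]
            rw [indicator_of_mem h2, indicator_of_mem hs2]
          · rw [show k r s = 0 from indicator_of_notMem hmem h]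
            by_cases h2 : r ∈ Icc (s - 2) (s + 2)
            · rw [indicator_of_mem h2]
              have h1s : s ∉ Ici (1 : ℝ) := by
                intro hc
                rw [mem_Icc] at h2
                refine hmem ⟨?_, hc⟩
                rw [mem_Icc]
                constructor <;> linarith [h2.1, h2.2]
              rw [indicator_of_notMem h1s]
            · rw [indicator_of_notMem h2]
        simp_rw [hks]
        rw [lintegral_indicator_const measurableSet_Icc]
    _ ≤ ∫⁻ s, K * ((Ici 1).indicator (fun x => ENNReal.ofReal (x ^ (d - 1)) * h x) s) ∂volume := by
        refine lintegral_mono fun s => ?_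
        by_cases hs : s ∈ Ici (1 : ℝ)
        · rw [indicator_of_mem hs, indicator_of_mem hs]
          calc h s * (mud d) (Icc (s - 2) (s + 2))
              ≤ h s * (K * ENNReal.ofReal (s ^ (d - 1))) :=
                mul_le_mul_right (mud_Icc_le d hs) _
            _ = K * (ENNReal.ofReal (s ^ (d - 1)) * h s) := by ring
        · rw [indicator_of_notMem hs, indicator_of_notMem hs]
          simp
    _ = K * ∫⁻ s in Ici 1, ENNReal.ofReal (s ^ (d - 1)) * h s ∂volume := by
        rw [lintegral_const_mul' _ _ hKne, lintegral_indicator measurableSet_Ici]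
    _ ≤ K * ∫⁻ s in Ioi 0, ENNReal.ofReal (s ^ (d - 1)) * h s ∂volume :=
        mul_le_mul_right (lintegral_mono_set Ici_subset_Ioi) _
    _ = K * ∫⁻ s, h s ∂(mud d) := by
        rw [mud, lintegral_withDensity_eq_lintegral_mul _ (wR_meas d) hm]
        rfl

lemma pt_bound_inf (d : ℕ) {f : ℝ → ℝ} {N : ℝ≥0∞}
    (hae : ∀ᵐ s ∂(mud d), ENNReal.ofReal |f s| ≤ N) (r : ℝ) : R1 f r ≤ 4 * N := by
  by_cases hr : 2 ≤ r
  · have hae' : ∀ᵐ s ∂(volume.restrict (Ioi (0 : ℝ))), ENNReal.ofReal |f s| ≤ N :=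
      hae.filter_mono (volIoi_ac d).ae_le
    set S := Icc (r - 2) (r + 2) ∩ Ici (1 : ℝ) with hSdef
    have hS : MeasurableSet S := measurableSet_Icc.inter measurableSet_Ici
    have hsub : S ⊆ Ioi (0 : ℝ) := fun x hx => Ici_subset_Ioi hx.2
    calc R1 f r ≤ ∫⁻ s in S, ENNReal.ofReal |f s| ∂volume := R1_le f hr
      _ = ∫⁻ s in S, ENNReal.ofReal |f s| ∂(volume.restrict (Ioi 0)) := by
          rw [Measure.restrict_restrict hS, inter_eq_left.mpr hsub]
      _ ≤ ∫⁻ _ in S, N ∂(volume.restrict (Ioi 0)) :=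
          lintegral_mono_ae (ae_restrict_of_ae hae')
      _ = N * (volume.restrict (Ioi 0)) S := setLIntegral_const _ _
      _ ≤ N * 4 := by
          refine mul_le_mul_right ?_ _
          rw [Measure.restrict_apply hS]
          exact le_trans (measure_mono (inter_subset_left.trans inter_subset_left)) 
            (le_of_eq (vol_Icc4 r))
      _ = 4 * N := mul_comm _ _
  · rw [R1, if_neg hr]
    exact zero_le

end R1aux

open R1aux

theorem R1_Lp_improving (d : ℕ) (hd : 1 ≤ d) (p q : ℝ≥0∞) (hp : 1 ≤ p) (hpq : p ≤ q) :
    ∃ C : ℝ≥0, ∀ f : ℝ → ℝ, Measurable f →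
      lpNormE (mud d) q (R1 f) ≤ C * lpNormE (mud d) p (fun s => ENNReal.ofReal |f s|) := by
  classical
  refine ⟨16 * 3 ^ (d - 1), fun f hf => ?_⟩
  have hFm : Measurable fun s => ENNReal.ofReal |f s| := hf.abs.ennreal_ofReal
  have hC : ((16 * 3 ^ (d - 1) : ℝ≥0) : ℝ≥0∞) = 16 * 3 ^ (d - 1) := by push_cast; ring
  have h3 : (1 : ℝ≥0∞) ≤ 3 ^ (d - 1) := one_le_pow₀ (by norm_num)
  have hC4 : (4 : ℝ≥0∞) ≤ 16 * 3 ^ (d - 1) := by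
    calc (4 : ℝ≥0∞) ≤ 16 := by norm_num
      _ = 16 * 1 := (mul_one _).symm
      _ ≤ 16 * 3 ^ (d - 1) := mul_le_mul_right h3 _
  by_cases hpt : p = ∞
  · have hqt : q = ∞ := top_le_iff.mp (hpt ▸ hpq)
    simp only [lpNormE, if_pos hqt, if_pos hpt]
    set N := essSup (fun s => ENNReal.ofReal |f s|) (mud d) with hN
    have hae : ∀ᵐ s ∂(mud d), ENNReal.ofReal |f s| ≤ N := ae_le_essSup
    refine essSup_le_of_ae_le _ (Filter.Eventually.of_forall fun r => ?_)
    refine le_trans (pt_bound_inf d hae r) ?_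
    rw [hC]
    exact mul_le_mul_left hC4 N
  · have hpR : 1 ≤ p.toReal := by
      have := ENNReal.toReal_mono hpt hp
      simpa using this
    set pR := p.toReal with hpRdef
    have hpR0 : (0 : ℝ) < pR := by linarith
    set I := ∫⁻ s, ENNReal.ofReal |f s| ^ pR ∂(mud d) with hI
    set N := I ^ (1 / pR) with hN
    have hlpp : lpNormE (mud d) p (fun s => ENNReal.ofReal |f s|) = N := by
      simp only [lpNormE, if_neg hpt]
      rfl
    have hpt' : ∀ r, R1 f r ≤ 4 * N := fun r => pt_bound d hpR hf r
    by_cases hqt : q = ∞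
    · rw [hlpp]
      simp only [lpNormE, if_pos hqt]
      refine essSup_le_of_ae_le _ (Filter.Eventually.of_forall fun r => ?_)
      refine le_trans (hpt' r) ?_
      rw [hC]
      exact mul_le_mul_left hC4 N
    · have hqRge : pR ≤ q.toReal := ENNReal.toReal_mono hqt hpq
      set qR := q.toReal with hqRdef
      have hqR1 : 1 ≤ qR := le_trans hpR hqRge
      have hqR0 : (0 : ℝ) < qR := by linarith
      have hsub : (0 : ℝ) ≤ qR - pR := sub_nonneg.2 hqRge
      have h1q0 : (0 : ℝ) ≤ 1 / qR := by positivity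
      rw [hlpp]
      simp only [lpNormE, if_neg hqt]
      rw [← hqRdef]
      by_cases hNt : N = ∞
      · rw [hNt, ENNReal.mul_top]
        · exact le_top
        · rw [hC]
          intro hcon
          have : (16 : ℝ≥0∞) * 3 ^ (d - 1) ≠ 0 :=
            mul_ne_zero (by norm_num) (pow_ne_zero _ (by norm_num))
          exact this hcon
      · have hIN : I = N ^ pR := by
          rw [hN, ← ENNReal.rpow_mul, one_div_mul_cancel (ne_of_gt hpR0), ENNReal.rpow_one]
        set K : ℝ≥0∞ := 4 * 3 ^ (d - 1) with hK
        have hKne : K ≠ ∞ := ENNReal.mul_ne_top (by norm_num) (ENNReal.pow_ne_top (by norm_num))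
        have hKge1 : (1 : ℝ≥0∞) ≤ K := by
          calc (1 : ℝ≥0∞) ≤ 4 := by norm_num
            _ = 4 * 1 := (mul_one _).symm
            _ ≤ 4 * 3 ^ (d - 1) := mul_le_mul_right h3 _
        have hB : ∫⁻ r, R1 f r ^ pR ∂(mud d) ≤ 4 ^ pR * (K * I) := by
          have hptw : ∀ r, R1 f r ^ pR
              ≤ 4 ^ pR * ∫⁻ s in Icc (r - 2) (r + 2) ∩ Ici 1,
                  ENNReal.ofReal |f s| ^ pR ∂volume := by
            intro r
            by_cases hr : 2 ≤ r
            · calc R1 f r ^ pR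
                  ≤ (∫⁻ s in Icc (r - 2) (r + 2) ∩ Ici 1,
                      ENNReal.ofReal |f s| ∂volume) ^ pR :=
                    ENNReal.rpow_le_rpow (R1_le f hr) hpR0.le
                _ ≤ _ := holder_pow hpR hFm (volS r)
            · rw [R1, if_neg hr, ENNReal.zero_rpow_of_pos hpR0]
              exact zero_le
          calc ∫⁻ r, R1 f r ^ pR ∂(mud d)
              ≤ ∫⁻ r, 4 ^ pR * ∫⁻ s in Icc (r - 2) (r + 2) ∩ Ici 1,
                  ENNReal.ofReal |f s| ^ pR ∂volume ∂(mud d) := lintegral_mono hptw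
            _ = 4 ^ pR * ∫⁻ r, (∫⁻ s in Icc (r - 2) (r + 2) ∩ Ici 1,
                  ENNReal.ofReal |f s| ^ pR ∂volume) ∂(mud d) :=
                lintegral_const_mul' _ _
                  (ENNReal.rpow_ne_top_of_nonneg hpR0.le (by norm_num))
            _ ≤ 4 ^ pR * (K * I) :=
                mul_le_mul_right (tonelli d (hFm.pow_const pR)) _
        have hA : ∫⁻ r, R1 f r ^ qR ∂(mud d) ≤ (4 * N) ^ (qR - pR) * (4 ^ pR * (K * I)) := by
          have hptw : ∀ r, R1 f r ^ qR ≤ (4 * N) ^ (qR - pR) * R1 f r ^ pR := by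
            intro r
            calc R1 f r ^ qR = R1 f r ^ ((qR - pR) + pR) := by rw [sub_add_cancel]
              _ = R1 f r ^ (qR - pR) * R1 f r ^ pR :=
                  ENNReal.rpow_add_of_nonneg _ _ hsub hpR0.le
              _ ≤ (4 * N) ^ (qR - pR) * R1 f r ^ pR :=
                  mul_le_mul_left (ENNReal.rpow_le_rpow (hpt' r) hsub) _
          have h4N : (4 * N) ^ (qR - pR) ≠ ∞ :=
            ENNReal.rpow_ne_top_of_nonneg hsub (ENNReal.mul_ne_top (by norm_num) hNt)
          calc ∫⁻ r, R1 f r ^ qR ∂(mud d)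
              ≤ ∫⁻ r, (4 * N) ^ (qR - pR) * R1 f r ^ pR ∂(mud d) := lintegral_mono hptw
            _ = (4 * N) ^ (qR - pR) * ∫⁻ r, R1 f r ^ pR ∂(mud d) :=
                lintegral_const_mul' _ _ h4N
            _ ≤ _ := mul_le_mul_right hB _
        have halg : (4 * N) ^ (qR - pR) * (4 ^ pR * (K * I)) = 4 ^ qR * K * N ^ qR := by
          have e4 : (4 : ℝ≥0∞) ^ qR = 4 ^ (qR - pR) * 4 ^ pR := by
            rw [← ENNReal.rpow_add_of_nonneg _ _ hsub hpR0.le, sub_add_cancel]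
          have eN : N ^ qR = N ^ (qR - pR) * N ^ pR := by
            rw [← ENNReal.rpow_add_of_nonneg _ _ hsub hpR0.le, sub_add_cancel]
          rw [ENNReal.mul_rpow_of_nonneg _ _ hsub, hIN, e4, eN]
          ring
        have hfinal : (∫⁻ r, R1 f r ^ qR ∂(mud d)) ^ (1 / qR)
            ≤ (4 ^ qR * K * N ^ qR) ^ (1 / qR) :=
          ENNReal.rpow_le_rpow (halg ▸ hA) h1q0
        have hsimp : ((4 : ℝ≥0∞) ^ qR * K * N ^ qR) ^ (1 / qR) = 4 * K ^ (1 / qR) * N := by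
          rw [ENNReal.mul_rpow_of_nonneg _ _ h1q0, ENNReal.mul_rpow_of_nonneg _ _ h1q0,
            ← ENNReal.rpow_mul, ← ENNReal.rpow_mul, mul_one_div_cancel (ne_of_gt hqR0),
            ENNReal.rpow_one, ENNReal.rpow_one]
        have hKle : K ^ (1 / qR) ≤ K := by
          calc K ^ (1 / qR) ≤ K ^ (1 : ℝ) := by
                refine ENNReal.rpow_le_rpow_of_exponent_le hKge1 ?_
                rw [div_le_one hqR0]
                exact hqR1
            _ = K := ENNReal.rpow_one K
        calc (∫⁻ r, R1 f r ^ qR ∂(mud d)) ^ (1 / qR)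
            ≤ 4 * K ^ (1 / qR) * N := hfinal.trans (le_of_eq hsimp)
          _ ≤ 4 * K * N := mul_le_mul_left (mul_le_mul_right hKle _) _
          _ = ↑(16 * 3 ^ (d - 1) : ℝ≥0) * N := by rw [hC, hK]; ring
end
end

section
/- Let f be the characteristic function of the unit ball in ℝ^d centered at the origin, d ≥ 2. Then for |x| sufficiently large, the global spherical maximal function satisfies M_{(0,∞)} f(x) ≥ A_{|x|} f(x) ≥ c · |x|^{−(d−1)} for some constant c > 0 depending only on d. Consequently, if M_{(0,∞)} is bounded from L^{p_d,1}_{rad}(ℝ^d) to L^{p_d,s}(ℝ^d) with p_d = d/(d−1), then s = ∞. -/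
open Set MeasureTheory Metric
open scoped ENNReal NNReal

noncomputable section

/-- The normalized surface measure on the unit sphere of `ℝ^d`. -/
def sphMeasure (d : ℕ) : Measure (sphere (0 : EuclideanSpace ℝ (Fin d)) 1) :=
  (((volume : Measure (EuclideanSpace ℝ (Fin d))).toSphere univ)⁻¹) •
    (volume : Measure (EuclideanSpace ℝ (Fin d))).toSphere

/-- Spherical average (of the absolute value) at radius `t`. -/
def sphAvg (d : ℕ) (f : EuclideanSpace ℝ (Fin d) → ℝ) (t : ℝ)
    (x : EuclideanSpace ℝ (Fin d)) : ℝ≥0∞ :=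
  ∫⁻ y : sphere (0 : EuclideanSpace ℝ (Fin d)) 1,
    ENNReal.ofReal |f (x - t • (y : EuclideanSpace ℝ (Fin d)))| ∂(sphMeasure d)

/-- The global spherical maximal operator `M_{(0,∞)}`. -/
def sphMaxGlobal (d : ℕ) (f : EuclideanSpace ℝ (Fin d) → ℝ)
    (x : EuclideanSpace ℝ (Fin d)) : ℝ≥0∞ :=
  ⨆ t ∈ Ioi (0 : ℝ), sphAvg d f t x

/-- The Lorentz `L^{p,s}` quasinorm (for finite `s`). -/
def lorentzNorm {α : Type*} [MeasurableSpace α] (μ : Measure α) (p s : ℝ)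
    (g : α → ℝ≥0∞) : ℝ≥0∞ :=
  (∫⁻ l in Ioi (0 : ℝ),
    ENNReal.ofReal (l ^ (s - 1)) * (μ {x | ENNReal.ofReal l < g x}) ^ (s / p)) ^ (1 / s)

/-- Characteristic function of the unit ball. -/
def ballInd (d : ℕ) (x : EuclideanSpace ℝ (Fin d)) : ℝ :=
  if ‖x‖ ≤ 1 then 1 else 0


set_option maxHeartbeats 1000000

open scoped RealInnerProductSpace Pointwise

variable {m : ℕ}
local notation "E" => EuclideanSpace ℝ (Fin (m+2))

theorem mem_cone (e : E) (δ : ℝ) (hδ0 : 0 < δ) (hδ1 : δ ≤ 1)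
    (T : E ≃ₗᵢ[ℝ] E) (hT : T (EuclideanSpace.single 0 1) = e)
    (z : E) (h0 : z 0 ∈ Icc (5/8 : ℝ) (7/8))
    (hi : ∀ i : Fin (m+2), i ≠ 0 →
      z i ∈ Icc (-(δ / (8 * Real.sqrt (m+2)))) (δ / (8 * Real.sqrt (m+2)))) :
    T z ∈ Ioo (0:ℝ) 1 • (Subtype.val '' {y : sphere (0 : E) 1 | ‖(y : E) - e‖ ≤ δ}) := by
  set r : ℝ := δ / (8 * Real.sqrt (m+2)) with hr
  have hsqrt : 1 ≤ Real.sqrt (m+2) := by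
    rw [show (1:ℝ) = Real.sqrt 1 by simp]
    exact Real.sqrt_le_sqrt (by push_cast; linarith)
  have hsq : Real.sqrt (m+2) ^ 2 = (m+2 : ℝ) := Real.sq_sqrt (by positivity)
  have hrpos : 0 < r := by positivity
  have hsum : ‖z‖ ^ 2 = ∑ i, z i ^ 2 := by
    rw [EuclideanSpace.norm_eq, Real.sq_sqrt (by positivity)]
    simp [sq_abs]
  have htail : ∑ i, z i ^ 2 ≤ z 0 ^ 2 + (m+2 : ℝ) * r ^ 2 := by
    rw [Fin.sum_univ_succ]
    have key : ∀ j : Fin (m+1), z j.succ ^ 2 ≤ r ^ 2 := fun j => by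
      have h := hi j.succ (Fin.succ_ne_zero j)
      exact sq_le_sq' h.1 h.2
    have : ∑ j : Fin (m+1), z j.succ ^ 2 ≤ (m+1 : ℝ) * r ^ 2 := by
      calc ∑ j : Fin (m+1), z j.succ ^ 2 ≤ ∑ _j : Fin (m+1), r ^ 2 :=
            Finset.sum_le_sum fun j _ => key j
        _ = (m+1 : ℝ) * r ^ 2 := by simp [Finset.sum_const]
    nlinarith [sq_nonneg r]
  have hrδ : (m+2 : ℝ) * r ^ 2 = δ ^ 2 / 64 := by
    rw [hr, div_pow, mul_pow, hsq]
    have h2 : ((m:ℝ)+2) ≠ 0 := by positivity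
    field_simp
    ring
  have hS : ∑ i, z i ^ 2 ≤ z 0 ^ 2 + δ ^ 2 / 64 := by rw [← hrδ]; exact htail
  have ha := h0
  have hn2lo : (5/8 : ℝ)^2 ≤ ‖z‖ ^ 2 := by
    rw [hsum, Fin.sum_univ_succ]
    have : (0:ℝ) ≤ ∑ j : Fin (m+1), z j.succ ^ 2 := by positivity
    nlinarith [ha.1, ha.2]
  have hn2hi : ‖z‖ ^ 2 ≤ 50/64 := by
    rw [hsum]
    nlinarith [ha.1, ha.2, hS, sq_nonneg δ, hδ1, hδ0.le]
  have hnpos : (5/8 : ℝ) ≤ ‖z‖ := by nlinarith [norm_nonneg z]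
  have hnlt1 : ‖z‖ < 1 := by nlinarith [norm_nonneg z]
  have hz0 : z ≠ 0 := by
    intro h; rw [h, norm_zero] at hnpos; linarith
  -- the unit vector
  set u : E := ‖z‖⁻¹ • z with hu
  have hunorm : ‖u‖ = 1 := by
    rw [hu, norm_smul]
    simp [abs_of_nonneg (inv_nonneg.2 (norm_nonneg z)),
      inv_mul_cancel₀ (by positivity : ‖z‖ ≠ 0)]
  have hinner : ⟪u, EuclideanSpace.single 0 (1:ℝ)⟫ = ‖z‖⁻¹ * z 0 := by
    rw [hu, real_inner_smul_left, EuclideanSpace.inner_single_right]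
    simp
  have hcap : ‖u - EuclideanSpace.single 0 (1:ℝ)‖ ≤ δ := by
    have hns : ‖u - EuclideanSpace.single 0 (1:ℝ)‖ ^ 2
        = 2 - 2 * (‖z‖⁻¹ * z 0) := by
      rw [norm_sub_sq_real, hinner, hunorm, EuclideanSpace.norm_single, norm_one]
      ring
    have h1 : ‖z‖ * (‖z‖ + z 0) ≥ 25/32 := by nlinarith [ha.1]
    have h2 : ‖z‖^2 - z 0 ^2 ≤ δ^2/64 := by
      rw [hsum]; nlinarith [hS]
    have h3 : 2 - 2 * (‖z‖⁻¹ * z 0) ≤ δ ^ 2 := by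
      have hzne : ‖z‖ ≠ 0 := by positivity
      rw [sub_le_iff_le_add]
      have key : 2 * ‖z‖ ≤ δ^2 * ‖z‖ + 2 * z 0 := by
        nlinarith [h1, h2, ha.1, hδ0.le, sq_nonneg δ]
      calc (2:ℝ) = (2 * ‖z‖) / ‖z‖ := by field_simp
        _ ≤ (δ^2 * ‖z‖ + 2 * z 0) / ‖z‖ := by
            have hzpos : (0:ℝ) < ‖z‖ := by linarith
            gcongr
        _ = δ^2 + 2 * (‖z‖⁻¹ * z 0) := by field_simp
    have h4 : ‖u - EuclideanSpace.single 0 (1:ℝ)‖ ^ 2 ≤ δ ^ 2 := by rw [hns]; exact h3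
    nlinarith [norm_nonneg (u - EuclideanSpace.single 0 (1:ℝ))]
  -- conclude
  have hTz : T z = ‖z‖ • T u := by
    rw [hu, ← T.map_smul, smul_inv_smul₀ (by positivity : ‖z‖ ≠ 0)]
  have hTu_sphere : T u ∈ sphere (0 : E) 1 := by
    rw [mem_sphere_zero_iff_norm, T.norm_map, hunorm]
  have hTu_cap : ‖T u - e‖ ≤ δ := by
    rw [← hT, ← T.map_sub, T.norm_map]
    exact hcap
  rw [hTz]
  exact Set.smul_mem_smul ⟨by positivity, hnlt1⟩
    ⟨⟨T u, hTu_sphere⟩, hTu_cap, rfl⟩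

theorem cap_meas (e : E) (he : ‖e‖ = 1) (δ : ℝ) (hδ0 : 0 < δ) (hδ1 : δ ≤ 1) :
    ENNReal.ofReal ((1/4) * (δ / (4 * Real.sqrt (m+2)))^(m+1)) ≤
      (volume : Measure E).toSphere {y : sphere (0 : E) 1 | ‖(y : E) - e‖ ≤ δ} := by
  set r : ℝ := δ / (8 * Real.sqrt (m+2)) with hrdef
  have hsqrt : 1 ≤ Real.sqrt (m+2) := by
    rw [show (1:ℝ) = Real.sqrt 1 by simp]
    exact Real.sqrt_le_sqrt (by push_cast; linarith)
  have hrpos : 0 < r := by positivity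
  have hC : MeasurableSet {y : sphere (0 : E) 1 | ‖(y : E) - e‖ ≤ δ} := by
    have : IsClosed {y : sphere (0 : E) 1 | ‖(y : E) - e‖ ≤ δ} :=
      isClosed_le (Continuous.norm (continuous_subtype_val.sub continuous_const))
        continuous_const
    exact this.measurableSet
  rw [Measure.toSphere_apply' _ hC]
  -- reflection
  obtain ⟨T, hT⟩ : ∃ T : E ≃ₗᵢ[ℝ] E, T (EuclideanSpace.single 0 1) = e :=
    ⟨Submodule.reflection (ℝ ∙ (EuclideanSpace.single 0 1 - e))ᗮ, Submodule.reflection_sub (by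
      rw [he, EuclideanSpace.norm_single, norm_one])⟩
  -- the box
  set I : Fin (m+2) → Set ℝ := fun i => if i = 0 then Icc (5/8 : ℝ) (7/8) else Icc (-r) r
    with hI
  set B : Set E := (MeasurableEquiv.toLp 2 (Fin (m+2) → ℝ)).symm ⁻¹' (univ.pi I) with hB
  have hImeas : MeasurableSet (univ.pi I) := by
    apply MeasurableSet.univ_pi
    intro i
    by_cases h : i = 0 <;> simp [hI, h, measurableSet_Icc]
  have hBmeas : MeasurableSet B :=
    (MeasurableEquiv.toLp 2 (Fin (m+2) → ℝ)).symm.measurable hImeas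
  have hBvol : volume B = ENNReal.ofReal (1/4) * ENNReal.ofReal (2*r) ^ (m+1) := by
    rw [hB, (EuclideanSpace.volume_preserving_symm_measurableEquiv_toLp
      (Fin (m+2))).measure_preimage hImeas.nullMeasurableSet]
    rw [volume_pi_pi]
    rw [Fin.prod_univ_succ]
    simp only [hI, if_pos rfl]
    have : ∀ j : Fin (m+1), (if j.succ = (0 : Fin (m+2)) then Icc (5/8 : ℝ) (7/8)
        else Icc (-r) r) = Icc (-r) r := fun j => if_neg (Fin.succ_ne_zero j)
    rw [Finset.prod_congr rfl (fun j _ => by rw [this j])]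
    rw [Finset.prod_const, Real.volume_Icc, Real.volume_Icc]
    norm_num
    rw [two_mul, ENNReal.ofReal_add hrpos.le hrpos.le]
  -- B maps into the cone
  have hsub : ⇑T '' B ⊆ Ioo (0:ℝ) 1 •
      (Subtype.val '' {y : sphere (0 : E) 1 | ‖(y : E) - e‖ ≤ δ}) := by
    rintro - ⟨z, hz, rfl⟩
    have hz' := hz
    rw [hB, mem_preimage, mem_univ_pi] at hz'
    apply mem_cone e δ hδ0 hδ1 T hT z
    · have := hz' 0; simpa [hI] using this
    · intro i hi
      have := hz' i
      simpa [hI, if_neg hi] using this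
  have himg : volume (⇑T '' B) = volume B := by
    rw [show ⇑T '' B = ⇑T.symm ⁻¹' B from Equiv.image_eq_preimage_symm T.toEquiv B]
    exact T.symm.measurePreserving.measure_preimage hBmeas.nullMeasurableSet
  calc ENNReal.ofReal ((1/4) * (δ / (4 * Real.sqrt (m+2)))^(m+1))
      = volume B := by
        rw [hBvol, ENNReal.ofReal_mul (by norm_num), ← ENNReal.ofReal_pow (by positivity)]
        congr 2
        rw [hrdef]
        ring
    _ = volume (⇑T '' B) := himg.symm
    _ ≤ volume (Ioo (0:ℝ) 1 •
        (Subtype.val '' {y : sphere (0 : E) 1 | ‖(y : E) - e‖ ≤ δ})) := measure_mono hsub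
    _ ≤ _ := le_mul_of_one_le_left zero_le (by
        rw [finrank_euclideanSpace_fin]
        exact_mod_cast Nat.le_add_left 1 (m+1))

theorem key : ∃ c : ℝ, 0 < c ∧ ∀ x : E, 1 ≤ ‖x‖ →
    ENNReal.ofReal (c * (‖x‖⁻¹) ^ (m+1)) ≤ sphAvg (m+2) (ballInd (m+2)) ‖x‖ x := by
  set Vb : ℝ≥0∞ := volume (ball (0:E) 1) with hVb
  have hVbne : Vb ≠ ⊤ := measure_ball_lt_top.ne
  have hVbRpos : 0 < Vb.toReal :=
    ENNReal.toReal_pos (measure_ball_pos _ _ one_pos).ne' hVbne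
  have hsqrt : 1 ≤ Real.sqrt (m+2) := by
    rw [show (1:ℝ) = Real.sqrt 1 by simp]
    exact Real.sqrt_le_sqrt (by push_cast; linarith)
  set c : ℝ := (1/4) * (1/(4*Real.sqrt (m+2)))^(m+1) / (((m:ℝ)+2) * Vb.toReal) with hc
  have hcpos : 0 < c := by
    apply div_pos (by positivity) (by positivity)
  refine ⟨c, hcpos, fun x hx => ?_⟩
  have hxpos : (0:ℝ) < ‖x‖ := lt_of_lt_of_le one_pos hx
  have hxne : x ≠ 0 := by intro h; rw [h, norm_zero] at hxpos; exact lt_irrefl _ hxpos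
  set δ : ℝ := ‖x‖⁻¹ with hδ
  have hδ0 : 0 < δ := by positivity
  have hδ1 : δ ≤ 1 := inv_le_one_of_one_le₀ hx
  set e : E := ‖x‖⁻¹ • x with he'
  have he : ‖e‖ = 1 := by
    rw [he', norm_smul, norm_inv, norm_norm, inv_mul_cancel₀ hxpos.ne']
  set C : Set (sphere (0 : E) 1) := {y : sphere (0 : E) 1 | ‖(y : E) - e‖ ≤ δ} with hCdef
  have hC : MeasurableSet C :=
    (isClosed_le (Continuous.norm (continuous_subtype_val.sub continuous_const))
      continuous_const).measurableSet
  -- step 1 : measure of cap ≤ spherical average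
  have step1 : sphMeasure (m+2) C ≤ sphAvg (m+2) (ballInd (m+2)) ‖x‖ x := by
    have hval : ∀ y ∈ C,
        ENNReal.ofReal |ballInd (m+2) (x - ‖x‖ • (y : E))| = 1 := by
      intro y hy
      have hxe : x - ‖x‖ • (y : E) = ‖x‖ • (e - (y : E)) := by
        rw [smul_sub, he', smul_smul, mul_inv_cancel₀ hxpos.ne', one_smul]
      have hnorm : ‖x - ‖x‖ • (y : E)‖ ≤ 1 := by
        rw [hxe, norm_smul, norm_norm, ← norm_sub_rev]
        calc ‖x‖ * ‖(y : E) - e‖ ≤ ‖x‖ * δ := by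
              have := hy
              exact mul_le_mul_of_nonneg_left this hxpos.le
          _ = 1 := by rw [hδ, mul_inv_cancel₀ hxpos.ne']
      rw [ballInd, if_pos hnorm]
      norm_num
    calc sphMeasure (m+2) C = ∫⁻ _y in C, 1 ∂(sphMeasure (m+2)) := by
          rw [setLIntegral_one]
      _ = ∫⁻ y in C, ENNReal.ofReal |ballInd (m+2) (x - ‖x‖ • (y : E))|
            ∂(sphMeasure (m+2)) := by
          refine (setLIntegral_congr_fun hC (fun y hy => ?_)).symm
          exact hval y hy
      _ ≤ ∫⁻ y, ENNReal.ofReal |ballInd (m+2) (x - ‖x‖ • (y : E))|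
            ∂(sphMeasure (m+2)) := setLIntegral_le_lintegral _ _
      _ = sphAvg (m+2) (ballInd (m+2)) ‖x‖ x := rfl
  -- step 2
  have hσuniv : (volume : Measure E).toSphere univ
      = ENNReal.ofReal (((m:ℝ)+2) * Vb.toReal) := by
    rw [Measure.toSphere_apply_univ, finrank_euclideanSpace_fin,
      ENNReal.ofReal_mul (by positivity), ENNReal.ofReal_toReal hVbne]
    rw [show ((m:ℝ)+2) = ((m+2 : ℕ) : ℝ) by push_cast; ring, ENNReal.ofReal_natCast]
  have step2 : ENNReal.ofReal (c * δ ^ (m+1)) ≤ sphMeasure (m+2) C := by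
    have hKpos : (0:ℝ) < ((m:ℝ)+2) * Vb.toReal := by positivity
    have hreal : c * δ ^ (m+1)
        = ((1/4) * (δ / (4 * Real.sqrt (m+2)))^(m+1)) / (((m:ℝ)+2) * Vb.toReal) := by
      rw [hc, div_pow, div_pow, one_pow]
      field_simp
    rw [sphMeasure, Measure.smul_apply, smul_eq_mul]
    calc ENNReal.ofReal (c * δ ^ (m+1))
        = ENNReal.ofReal ((1/4) * (δ / (4 * Real.sqrt (m+2)))^(m+1))
            / ((volume : Measure E).toSphere univ) := by
          rw [hreal, ENNReal.ofReal_div_of_pos hKpos, hσuniv]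
      _ ≤ (volume : Measure E).toSphere C / ((volume : Measure E).toSphere univ) := by
          exact ENNReal.div_le_div_right (cap_meas e he δ hδ0 hδ1) _
      _ = ((volume : Measure E).toSphere univ)⁻¹ * (volume : Measure E).toSphere C := by
          rw [ENNReal.div_eq_inv_mul]
  exact le_trans step2 step1

theorem rhs_finite (p : ℝ) (hp : 0 < p) :
    lorentzNorm (volume : Measure E) p 1 (fun x => ENNReal.ofReal |ballInd (m+2) x|) ≠ ⊤ := by
  rw [lorentzNorm]
  set Vc : ℝ≥0∞ := volume (closedBall (0:E) 1) with hVc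
  have hVcne : Vc ≠ ⊤ := measure_closedBall_lt_top.ne
  have hb : (∫⁻ l in Ioi (0:ℝ), ENNReal.ofReal (l ^ ((1:ℝ) - 1)) *
      (volume {x : E | ENNReal.ofReal l < ENNReal.ofReal |ballInd (m+2) x|}) ^ ((1:ℝ)/p))
      ≤ Vc ^ ((1:ℝ)/p) := by
    calc (∫⁻ l in Ioi (0:ℝ), ENNReal.ofReal (l ^ ((1:ℝ) - 1)) *
        (volume {x : E | ENNReal.ofReal l < ENNReal.ofReal |ballInd (m+2) x|}) ^ ((1:ℝ)/p))
        ≤ ∫⁻ l in Ioi (0:ℝ), (Ioo (0:ℝ) 1).indicator (fun _ => Vc ^ ((1:ℝ)/p)) l := by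
          refine setLIntegral_mono' measurableSet_Ioi (fun l hl => ?_)
          rw [mem_Ioi] at hl
          by_cases hl1 : l < 1
          · rw [indicator_of_mem (show l ∈ Ioo (0:ℝ) 1 from ⟨hl, hl1⟩), show (1:ℝ) - 1 = 0 by norm_num,
              Real.rpow_zero, ENNReal.ofReal_one, one_mul]
            refine ENNReal.rpow_le_rpow (measure_mono ?_) (by positivity)
            intro x hx
            rw [mem_setOf_eq] at hx
            rw [mem_closedBall_zero_iff]
            by_contra hxb
            rw [ballInd, if_neg hxb] at hx
            simp at hx
          · rw [indicator_of_notMem (fun h => hl1 h.2)]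
            have hempty : {x : E | ENNReal.ofReal l < ENNReal.ofReal |ballInd (m+2) x|} = ∅ := by
              ext x
              simp only [mem_setOf_eq, mem_empty_iff_false, iff_false, not_lt]
              have : |ballInd (m+2) x| ≤ 1 := by
                rw [ballInd]; split <;> norm_num
              calc ENNReal.ofReal |ballInd (m+2) x| ≤ ENNReal.ofReal 1 :=
                    ENNReal.ofReal_le_ofReal this
                _ ≤ ENNReal.ofReal l := ENNReal.ofReal_le_ofReal (by linarith)
            rw [hempty, measure_empty, ENNReal.zero_rpow_of_pos (by positivity), mul_zero]
      _ ≤ Vc ^ ((1:ℝ)/p) := by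
          rw [lintegral_indicator measurableSet_Ioo,
            Measure.restrict_restrict measurableSet_Ioo, setLIntegral_const]
          calc Vc ^ ((1:ℝ)/p) * volume (Ioo (0:ℝ) 1 ∩ Ioi 0)
              ≤ Vc ^ ((1:ℝ)/p) * volume (Ioo (0:ℝ) 1) :=
                mul_le_mul_right (measure_mono inter_subset_left) _
            _ = Vc ^ ((1:ℝ)/p) := by
                rw [Real.volume_Ioo]; norm_num
  have hfin : Vc ^ ((1:ℝ)/p) ≠ ⊤ :=
    (ENNReal.rpow_lt_top_of_nonneg (by positivity) hVcne).ne
  intro h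
  rw [show (1:ℝ)/1 = 1 by norm_num, ENNReal.rpow_one] at h
  exact hfin (top_le_iff.mp (h ▸ hb) ▸ rfl)

theorem lhs_top (p : ℝ) (hp : p = ((m:ℝ)+2)/((m:ℝ)+1)) (s : ℝ) (hs : 0 < s) :
    lorentzNorm (volume : Measure E) p s (sphMaxGlobal (m+2) (ballInd (m+2))) = ⊤ := by
  obtain ⟨c, hc, hkey⟩ := key (m := m)
  have hM : ∀ x : E, 1 ≤ ‖x‖ →
      ENNReal.ofReal (c * (‖x‖⁻¹)^(m+1)) ≤ sphMaxGlobal (m+2) (ballInd (m+2)) x :=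
    fun x hx => by
      refine (hkey x hx).trans ?_
      rw [sphMaxGlobal]
      exact le_biSup (fun t => sphAvg (m+2) (ballInd (m+2)) t x)
        (show ‖x‖ ∈ Ioi (0:ℝ) from lt_of_lt_of_le one_pos hx)
  have hppos : 0 < p := by rw [hp]; positivity
  have hm1 : ((m:ℝ)+1) ≠ 0 := by positivity
  set Vb : ℝ≥0∞ := volume (ball (0:E) 1) with hVb
  have hVbne : Vb ≠ ⊤ := measure_ball_lt_top.ne
  set VbR : ℝ := Vb.toReal with hVbR
  have hVbRpos : 0 < VbR := ENNReal.toReal_pos (measure_ball_pos _ _ one_pos).ne' hVbne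
  have hVbeq : Vb = ENNReal.ofReal VbR := (ENNReal.ofReal_toReal hVbne).symm
  set l₀ : ℝ := c / (2 * 4^(m+1)) with hl₀
  have hl₀pos : 0 < l₀ := by positivity
  set K : ℝ := (c/2)^s * (VbR/2)^(s/p) with hK
  have hKpos : 0 < K := by
    apply mul_pos (Real.rpow_pos_of_pos (by positivity) _) (Real.rpow_pos_of_pos (by positivity) _)
  -- pointwise bound
  have hPW : ∀ l ∈ Ioo (0:ℝ) l₀,
      ENNReal.ofReal (K * l⁻¹) ≤ ENNReal.ofReal (l^(s-1)) *
        (volume {x : E | ENNReal.ofReal l < sphMaxGlobal (m+2) (ballInd (m+2)) x})^(s/p) := by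
    rintro l ⟨hl0, hll⟩
    set u : ℝ := c/(2*l) with hu
    have hupos : 0 < u := by positivity
    have hu4 : (4:ℝ)^(m+1) < u := by
      rw [hu, lt_div_iff₀ (by positivity)]
      rw [hl₀, lt_div_iff₀ (by positivity)] at hll
      linarith
    set ρ : ℝ := u ^ ((1:ℝ)/((m:ℝ)+1)) with hρ
    have hρpos : 0 < ρ := Real.rpow_pos_of_pos hupos _
    have hρ4 : 4 < ρ := by
      have h4 : (4:ℝ) = ((4:ℝ)^(m+1 : ℕ)) ^ ((1:ℝ)/((m:ℝ)+1)) := by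
        rw [← Real.rpow_natCast 4 (m+1), ← Real.rpow_mul (by norm_num)]
        push_cast
        rw [mul_one_div, div_self hm1, Real.rpow_one]
      rw [h4, hρ]
      exact Real.rpow_lt_rpow (by positivity) hu4 (by positivity)
    have hρ_pow_d : ρ ^ (m+2 : ℕ) = u ^ p := by
      rw [hρ, ← Real.rpow_natCast (u ^ ((1:ℝ)/((m:ℝ)+1))) (m+2), ← Real.rpow_mul hupos.le, hp]
      congr 1
      push_cast
      field_simp
    have hρ_pow_m1 : ρ ^ (m+1 : ℕ) = u := by
      rw [hρ, ← Real.rpow_natCast _ (m+1), ← Real.rpow_mul hupos.le]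
      push_cast
      rw [one_div, inv_mul_cancel₀ hm1, Real.rpow_one]
    -- annulus
    set A : Set E := closedBall (0:E) ρ \ closedBall (0:E) 2 with hA
    have hAsub : A ⊆ {x : E | ENNReal.ofReal l < sphMaxGlobal (m+2) (ballInd (m+2)) x} := by
      rintro x ⟨hx1, hx2⟩
      rw [mem_closedBall_zero_iff] at hx1
      rw [mem_closedBall_zero_iff] at hx2
      push_neg at hx2
      have hx1' : 1 ≤ ‖x‖ := by linarith
      have hlt : l < c * (‖x‖⁻¹)^(m+1) := by
        have hxp : ‖x‖^(m+1) ≤ u := by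
          rw [← hρ_pow_m1]; exact pow_le_pow_left₀ (norm_nonneg x) hx1 _
        have hxppos : (0:ℝ) < ‖x‖^(m+1) := by positivity
        have hdiv : c / u ≤ c / ‖x‖^(m+1) := by gcongr
        have hcu : c / u = 2*l := by
          rw [hu]; field_simp
        calc l < 2*l := by linarith
          _ = c/u := hcu.symm
          _ ≤ c/‖x‖^(m+1) := hdiv
          _ = c * (‖x‖⁻¹)^(m+1) := by rw [inv_pow, div_eq_mul_inv]
      rw [mem_setOf_eq]
      calc ENNReal.ofReal l < ENNReal.ofReal (c * (‖x‖⁻¹)^(m+1)) :=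
            (ENNReal.ofReal_lt_ofReal_iff (by positivity)).2 hlt
        _ ≤ _ := hM x hx1'
    have hVolA : ENNReal.ofReal (ρ^(m+2:ℕ)/2 * VbR) ≤ volume A := by
      have hsub2 : closedBall (0:E) 2 ⊆ closedBall (0:E) ρ :=
        closedBall_subset_closedBall (by linarith)
      have hmd : volume A = volume (closedBall (0:E) ρ) - volume (closedBall (0:E) 2) := by
        rw [hA]
        exact measure_diff hsub2 measurableSet_closedBall.nullMeasurableSet
          measure_closedBall_lt_top.ne
      have h2ρ : (2:ℝ)^(m+2:ℕ) ≤ ρ^(m+2:ℕ)/2 := by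
        have h1 : (4:ℝ)^(m+2:ℕ) ≤ ρ^(m+2:ℕ) := pow_le_pow_left₀ (by norm_num) hρ4.le _
        have h2 : (4:ℝ)^(m+2:ℕ) = 2^(m+2:ℕ) * 2^(m+2:ℕ) := by rw [← mul_pow]; norm_num
        have h3 : (2:ℝ) ≤ 2^(m+2:ℕ) := by
          calc (2:ℝ) = 2^1 := (pow_one 2).symm
            _ ≤ 2^(m+2:ℕ) := pow_le_pow_right₀ (by norm_num) (by omega)
        nlinarith [pow_pos (show (0:ℝ)<2 by norm_num) (m+2)]
      rw [hmd, Measure.addHaar_closedBall _ _ (by linarith : (0:ℝ) ≤ ρ),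
        Measure.addHaar_closedBall _ _ (by norm_num : (0:ℝ) ≤ 2), finrank_euclideanSpace_fin,
        ← ENNReal.sub_mul (fun _ _ => hVbne), ← ENNReal.ofReal_sub _ (by positivity),
        hVbeq, ← ENNReal.ofReal_mul (by nlinarith [pow_pos hρpos (m+2)])]
      refine ENNReal.ofReal_le_ofReal ?_
      have : ρ^(m+2:ℕ)/2 ≤ ρ^(m+2:ℕ) - 2^(m+2:ℕ) := by linarith
      exact mul_le_mul_of_nonneg_right this hVbRpos.le
    -- real identity
    have e4 : l^(s-1) * (l⁻¹)^s = l⁻¹ := by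
      rw [Real.inv_rpow hl0.le, ← Real.rpow_neg hl0.le, ← Real.rpow_add hl0,
        show s - 1 + -s = -1 by ring, Real.rpow_neg_one]
    have hiden : l^(s-1) * ((ρ^(m+2:ℕ)/2 * VbR)^(s/p)) = K * l⁻¹ := by
      have hpe : p * (s/p) = s := by field_simp
      have e1 : ρ^(m+2:ℕ)/2 * VbR = u^p * (VbR/2) := by rw [hρ_pow_d]; ring
      have e2 : (u^p)^(s/p) = u^s := by
        rw [← Real.rpow_mul hupos.le, hpe]
      have e3 : u^s = (c/2)^s * (l⁻¹)^s := by
        rw [← Real.mul_rpow (by positivity) (by positivity)]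
        congr 1
        rw [hu]
        field_simp
      rw [e1, Real.mul_rpow (Real.rpow_nonneg hupos.le _) (by positivity), e2, e3]
      calc l^(s-1) * ((c/2)^s * (l⁻¹)^s * (VbR/2)^(s/p))
          = (l^(s-1) * (l⁻¹)^s) * ((c/2)^s * (VbR/2)^(s/p)) := by ring
        _ = K * l⁻¹ := by rw [e4, hK]; ring
    calc ENNReal.ofReal (K * l⁻¹)
        = ENNReal.ofReal (l^(s-1)) * ENNReal.ofReal ((ρ^(m+2:ℕ)/2 * VbR)^(s/p)) := by
          rw [← ENNReal.ofReal_mul (by positivity), hiden]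
      _ = ENNReal.ofReal (l^(s-1)) * (ENNReal.ofReal (ρ^(m+2:ℕ)/2 * VbR))^(s/p) := by
          congr 1
          exact (ENNReal.ofReal_rpow_of_pos (by positivity)).symm
      _ ≤ ENNReal.ofReal (l^(s-1)) * (volume A)^(s/p) :=
          mul_le_mul_right (ENNReal.rpow_le_rpow hVolA (by positivity)) _
      _ ≤ _ := mul_le_mul_right (ENNReal.rpow_le_rpow (measure_mono hAsub) (by positivity)) _
  -- divergence of the integral
  rw [lorentzNorm]
  have hJ : (∫⁻ l in Ioi (0:ℝ), ENNReal.ofReal (l ^ (s - 1)) *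
      (volume {x : E | ENNReal.ofReal l < sphMaxGlobal (m+2) (ballInd (m+2)) x}) ^ (s / p)) = ⊤ := by
    apply ENNReal.eq_top_of_forall_nnreal_le
    intro n
    set t : ℝ := l₀ * Real.exp (-((n:ℝ)/K) - 1) with ht
    have htpos : 0 < t := by positivity
    have htlt : t < l₀ := by
      rw [ht]
      have hexp : Real.exp (-((n:ℝ)/K) - 1) < 1 := by
        rw [Real.exp_lt_one_iff]
        have : (0:ℝ) ≤ (n:ℝ)/K := by positivity
        linarith
      nlinarith [hl₀pos]
    have hlog : K * (Real.log l₀ - Real.log t) = (n:ℝ) + K := by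
      rw [ht, Real.log_mul hl₀pos.ne' (Real.exp_ne_zero _), Real.log_exp]
      field_simp
      ring
    have hInt : IntegrableOn (fun l : ℝ => K * l⁻¹) (Ioo t l₀) volume := by
      have hII : IntervalIntegrable (fun l:ℝ => l⁻¹) volume t l₀ :=
        intervalIntegral.intervalIntegrable_inv (fun x hx => by
          rw [uIcc_of_le htlt.le] at hx
          exact (lt_of_lt_of_le htpos hx.1).ne') continuousOn_id
      exact (hII.const_mul K).1.mono_set Ioo_subset_Ioc_self
    have hnn : 0 ≤ᵐ[volume.restrict (Ioo t l₀)] fun l : ℝ => K * l⁻¹ :=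
      (ae_restrict_iff' measurableSet_Ioo).2 (ae_of_all _ fun x hx =>
        mul_nonneg hKpos.le (inv_nonneg.2 (le_of_lt (htpos.trans hx.1))))
    have hIeq : ∫ l in Ioo t l₀, K * l⁻¹ = K * (Real.log l₀ - Real.log t) := by
      rw [← integral_Ioc_eq_integral_Ioo, ← intervalIntegral.integral_of_le htlt.le,
        intervalIntegral.integral_const_mul,
        integral_inv (by
          rw [uIcc_of_le htlt.le]
          intro h
          exact absurd h.1 (by linarith)),
        Real.log_div hl₀pos.ne' htpos.ne']
    calc (n : ℝ≥0∞) = ENNReal.ofReal (n:ℝ) := ENNReal.ofReal_coe_nnreal.symm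
      _ ≤ ENNReal.ofReal (K * (Real.log l₀ - Real.log t)) := by
          rw [hlog]
          exact ENNReal.ofReal_le_ofReal (by linarith)
      _ = ENNReal.ofReal (∫ l in Ioo t l₀, K * l⁻¹) := by rw [hIeq]
      _ = ∫⁻ l in Ioo t l₀, ENNReal.ofReal (K * l⁻¹) :=
          ofReal_integral_eq_lintegral_ofReal hInt hnn
      _ ≤ ∫⁻ l in Ioo t l₀, ENNReal.ofReal (l ^ (s - 1)) *
          (volume {x : E | ENNReal.ofReal l < sphMaxGlobal (m+2) (ballInd (m+2)) x}) ^ (s / p) :=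
          setLIntegral_mono' measurableSet_Ioo (fun l hl =>
            hPW l ⟨htpos.trans hl.1, hl.2⟩)
      _ ≤ _ := lintegral_mono_set (fun l hl => htpos.trans hl.1)
  rw [hJ, ENNReal.top_rpow_of_pos (by positivity)]

theorem global_spherical_maximal_ball_lower_bound (d : ℕ) (hd : 2 ≤ d) :
    (∃ c : ℝ, 0 < c ∧ ∃ R : ℝ, 1 ≤ R ∧ ∀ x : EuclideanSpace ℝ (Fin d), R ≤ ‖x‖ →
      ENNReal.ofReal (c * ‖x‖ ^ (-(d - 1 : ℝ))) ≤ sphAvg d (ballInd d) ‖x‖ x ∧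
      sphAvg d (ballInd d) ‖x‖ x ≤ sphMaxGlobal d (ballInd d) x) ∧
    (∀ s : ℝ, 0 < s →
      ¬ ∃ C : ℝ≥0, ∀ f : EuclideanSpace ℝ (Fin d) → ℝ,
        (∀ x y, ‖x‖ = ‖y‖ → f x = f y) →
        lorentzNorm (volume : Measure (EuclideanSpace ℝ (Fin d)))
            ((d : ℝ) / (d - 1)) s (sphMaxGlobal d f) ≤
          C * lorentzNorm (volume : Measure (EuclideanSpace ℝ (Fin d)))
            ((d : ℝ) / (d - 1)) 1 (fun x => ENNReal.ofReal |f x|)) := by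
  obtain ⟨m, rfl⟩ : ∃ m, d = m + 2 := ⟨d - 2, by omega⟩
  constructor
  · obtain ⟨c, hc, hkey⟩ := key (m := m)
    refine ⟨c, hc, 1, le_refl 1, fun x hx => ⟨?_, ?_⟩⟩
    · have hconv : ‖x‖ ^ (-((((m+2:ℕ)):ℝ) - 1)) = (‖x‖⁻¹)^(m+1) := by
        rw [show (((m+2:ℕ)):ℝ) - 1 = (((m+1:ℕ)):ℝ) by push_cast; ring,
          Real.rpow_neg (norm_nonneg x), Real.rpow_natCast, inv_pow]
      rw [hconv]
      exact hkey x hx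
    · rw [sphMaxGlobal]
      exact le_biSup (fun t => sphAvg (m+2) (ballInd (m+2)) t x)
        (show ‖x‖ ∈ Ioi (0:ℝ) from lt_of_lt_of_le one_pos hx)
  · rintro s hs ⟨C, h⟩
    have hpval : (((m+2:ℕ):ℝ) / ((((m+2:ℕ)):ℝ) - 1)) = ((m:ℝ)+2)/((m:ℝ)+1) := by
      push_cast; ring_nf
    have hppos : 0 < (((m+2:ℕ):ℝ) / ((((m+2:ℕ)):ℝ) - 1)) := by
      rw [hpval]; positivity
    have hrad : ∀ x y : EuclideanSpace ℝ (Fin (m+2)), ‖x‖ = ‖y‖ →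
        ballInd (m+2) x = ballInd (m+2) y := by
      intro x y hxy; simp only [ballInd, hxy]
    have h2 := h (ballInd (m+2)) hrad
    rw [lhs_top _ hpval s hs] at h2
    exact ENNReal.mul_ne_top ENNReal.coe_ne_top (rhs_finite _ hppos) (top_le_iff.mp h2)
end
end

section
/- One-dimensional square-root kernel bound: let 0 ≤ A < B and let à ⊆ (A,B) be measurable. Then ∫_Ã [(z²−A²)(B²−z²)]^{−1/2} · z dz ≤ C · ( (1/(B²−A²)) · ∫_Ã z dz )^{1/2} for an absolute constant C independent of A, B, Ã. -/
open Set MeasureTheory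
open scoped ENNReal NNReal

noncomputable section

private lemma my_lintegral_image {s : Set ℝ} {f f' : ℝ → ℝ} (hs : MeasurableSet s)
    (hf' : ∀ x ∈ s, HasDerivWithinAt f (f' x) s x) (hf : InjOn f s) (g : ℝ → ℝ≥0∞) :
    ∫⁻ x in f '' s, g x = ∫⁻ x in s, ENNReal.ofReal |f' x| * g (f x) := by
  simpa only [ContinuousLinearMap.det_toSpanSingleton] using
    lintegral_image_eq_lintegral_abs_det_fderiv_mul volume hs
      (fun x hx => (hf' x hx).hasFDerivWithinAt) hf g

private lemma half_bound_left (a : ℝ) (T : Set ℝ) (hT : MeasurableSet T) (hsub : T ⊆ Ioi a)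
    (hfin : volume T ≠ ⊤) :
    ∫⁻ u in T, ENNReal.ofReal ((u - a) ^ (-(1/2) : ℝ)) ≤ 3 * (volume T) ^ (1/2 : ℝ) := by
  rcases eq_or_ne (volume T) 0 with h0 | h0
  · rw [Measure.restrict_eq_zero.mpr h0, lintegral_zero_measure]
    exact zero_le
  set r := (volume T).toReal with hr
  have hrpos : 0 < r := ENNReal.toReal_pos h0 hfin
  have hmr : volume T = ENNReal.ofReal r := (ENNReal.ofReal_toReal hfin).symm
  have hsplit := lintegral_inter_add_diff
    (μ := volume) (fun u => ENNReal.ofReal ((u - a) ^ (-(1/2) : ℝ))) T (measurableSet_Ioc (a := a) (b := a + r))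
  -- interval integrability
  have hii : IntervalIntegrable (fun u : ℝ => (u - a) ^ (-(1/2) : ℝ)) volume a (a + r) := by
    have := (intervalIntegral.intervalIntegrable_rpow' (a := 0) (b := r)
      (show (-1 : ℝ) < -(1/2) by norm_num)).comp_sub_right a
    simpa [add_comm] using this
  have hint : IntegrableOn (fun u : ℝ => (u - a) ^ (-(1/2) : ℝ)) (Ioc a (a + r)) volume := by
    rw [← intervalIntegrable_iff_integrableOn_Ioc_of_le (by linarith)]
    exact hii
  have hval : ∫ u in a..(a + r), (u - a) ^ (-(1/2) : ℝ) = 2 * r ^ (1/2 : ℝ) := by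
    rw [intervalIntegral.integral_comp_sub_right (fun x => x ^ (-(1/2) : ℝ)) a]
    simp only [sub_self, add_sub_cancel_left]
    rw [integral_rpow (Or.inl (by norm_num))]
    rw [Real.zero_rpow (by norm_num)]
    norm_num
    ring
  have hpart1 : (∫⁻ u in T ∩ Ioc a (a + r), ENNReal.ofReal ((u - a) ^ (-(1/2) : ℝ)))
      ≤ ENNReal.ofReal (2 * r ^ (1/2 : ℝ)) := by
    calc (∫⁻ u in T ∩ Ioc a (a + r), ENNReal.ofReal ((u - a) ^ (-(1/2) : ℝ)))
        ≤ ∫⁻ u in Ioc a (a + r), ENNReal.ofReal ((u - a) ^ (-(1/2) : ℝ)) :=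
          lintegral_mono_set inter_subset_right
      _ = ENNReal.ofReal (∫ u in Ioc a (a + r), (u - a) ^ (-(1/2) : ℝ)) := by
          rw [ofReal_integral_eq_lintegral_ofReal hint]
          filter_upwards [ae_restrict_mem measurableSet_Ioc] with u hu
          exact Real.rpow_nonneg (by linarith [hu.1] : (0:ℝ) ≤ u - a) _
      _ = ENNReal.ofReal (2 * r ^ (1/2 : ℝ)) := by
          rw [← intervalIntegral.integral_of_le (by linarith), hval]
  have hpart2 : (∫⁻ u in T \ Ioc a (a + r), ENNReal.ofReal ((u - a) ^ (-(1/2) : ℝ)))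
      ≤ ENNReal.ofReal (r ^ (1/2 : ℝ)) := by
    have hb : ∀ u ∈ T \ Ioc a (a + r),
        ENNReal.ofReal ((u - a) ^ (-(1/2) : ℝ)) ≤ ENNReal.ofReal (r ^ (-(1/2) : ℝ)) := by
      intro u hu
      apply ENNReal.ofReal_le_ofReal
      have h1 : a < u := hsub hu.1
      have h2 : r ≤ u - a := by
        by_contra hcon
        exact hu.2 ⟨h1, by linarith⟩
      exact Real.rpow_le_rpow_of_nonpos hrpos h2 (by norm_num)
    calc (∫⁻ u in T \ Ioc a (a + r), ENNReal.ofReal ((u - a) ^ (-(1/2) : ℝ)))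
        ≤ ∫⁻ _ in T \ Ioc a (a + r), ENNReal.ofReal (r ^ (-(1/2) : ℝ)) :=
          setLIntegral_mono' (hT.diff measurableSet_Ioc) hb
      _ = ENNReal.ofReal (r ^ (-(1/2) : ℝ)) * volume (T \ Ioc a (a + r)) :=
          setLIntegral_const _ _
      _ ≤ ENNReal.ofReal (r ^ (-(1/2) : ℝ)) * ENNReal.ofReal r := by
          gcongr
          rw [← hmr]
          exact measure_mono diff_subset
      _ = ENNReal.ofReal (r ^ (-(1/2) : ℝ) * r) :=
          (ENNReal.ofReal_mul (Real.rpow_nonneg hrpos.le _)).symm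
      _ = ENNReal.ofReal (r ^ (1/2 : ℝ)) := by
          congr 1
          have h := (Real.rpow_add hrpos (-(1/2)) 1).symm
          rw [Real.rpow_one] at h
          rw [h]
          norm_num
  calc (∫⁻ u in T, ENNReal.ofReal ((u - a) ^ (-(1/2) : ℝ)))
      = (∫⁻ u in T ∩ Ioc a (a + r), ENNReal.ofReal ((u - a) ^ (-(1/2) : ℝ)))
        + ∫⁻ u in T \ Ioc a (a + r), ENNReal.ofReal ((u - a) ^ (-(1/2) : ℝ)) := hsplit.symm
    _ ≤ ENNReal.ofReal (2 * r ^ (1/2 : ℝ)) + ENNReal.ofReal (r ^ (1/2 : ℝ)) :=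
        add_le_add hpart1 hpart2
    _ = ENNReal.ofReal (3 * r ^ (1/2 : ℝ)) := by
        rw [← ENNReal.ofReal_add (by positivity) (by positivity)]
        ring_nf
    _ = 3 * (volume T) ^ (1/2 : ℝ) := by
        rw [hmr, ENNReal.ofReal_rpow_of_pos hrpos,
          ENNReal.ofReal_mul (by norm_num), ENNReal.ofReal_ofNat]

private lemma half_bound_right (b : ℝ) (T : Set ℝ) (hT : MeasurableSet T) (hsub : T ⊆ Iio b)
    (hfin : volume T ≠ ⊤) :
    ∫⁻ u in T, ENNReal.ofReal ((b - u) ^ (-(1/2) : ℝ)) ≤ 3 * (volume T) ^ (1/2 : ℝ) := by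
  rcases eq_or_ne (volume T) 0 with h0 | h0
  · rw [Measure.restrict_eq_zero.mpr h0, lintegral_zero_measure]
    exact zero_le
  set r := (volume T).toReal with hr
  have hrpos : 0 < r := ENNReal.toReal_pos h0 hfin
  have hmr : volume T = ENNReal.ofReal r := (ENNReal.ofReal_toReal hfin).symm
  have hsplit := lintegral_inter_add_diff (μ := volume)
    (fun u => ENNReal.ofReal ((b - u) ^ (-(1/2) : ℝ))) T
    (measurableSet_Ioc (a := b - r) (b := b))
  have hii : IntervalIntegrable (fun u : ℝ => (b - u) ^ (-(1/2) : ℝ)) volume (b - r) b := by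
    have := ((intervalIntegral.intervalIntegrable_rpow' (a := 0) (b := r)
      (show (-1 : ℝ) < -(1/2) by norm_num)).comp_sub_left b).symm
    simpa using this
  have hint : IntegrableOn (fun u : ℝ => (b - u) ^ (-(1/2) : ℝ)) (Ioc (b - r) b) volume := by
    rw [← intervalIntegrable_iff_integrableOn_Ioc_of_le (by linarith)]
    exact hii
  have hval : ∫ u in (b - r)..b, (b - u) ^ (-(1/2) : ℝ) = 2 * r ^ (1/2 : ℝ) := by
    rw [intervalIntegral.integral_comp_sub_left (fun x => x ^ (-(1/2) : ℝ)) b]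
    simp only [sub_self, sub_sub_cancel]
    rw [integral_rpow (Or.inl (by norm_num))]
    rw [Real.zero_rpow (by norm_num)]
    norm_num
    ring
  have hpart1 : (∫⁻ u in T ∩ Ioc (b - r) b, ENNReal.ofReal ((b - u) ^ (-(1/2) : ℝ)))
      ≤ ENNReal.ofReal (2 * r ^ (1/2 : ℝ)) := by
    calc (∫⁻ u in T ∩ Ioc (b - r) b, ENNReal.ofReal ((b - u) ^ (-(1/2) : ℝ)))
        ≤ ∫⁻ u in Ioc (b - r) b, ENNReal.ofReal ((b - u) ^ (-(1/2) : ℝ)) :=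
          lintegral_mono_set inter_subset_right
      _ = ENNReal.ofReal (∫ u in Ioc (b - r) b, (b - u) ^ (-(1/2) : ℝ)) := by
          rw [ofReal_integral_eq_lintegral_ofReal hint]
          filter_upwards [ae_restrict_mem measurableSet_Ioc] with u hu
          exact Real.rpow_nonneg (by linarith [hu.2] : (0:ℝ) ≤ b - u) _
      _ = ENNReal.ofReal (2 * r ^ (1/2 : ℝ)) := by
          rw [← intervalIntegral.integral_of_le (by linarith), hval]
  have hpart2 : (∫⁻ u in T \ Ioc (b - r) b, ENNReal.ofReal ((b - u) ^ (-(1/2) : ℝ)))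
      ≤ ENNReal.ofReal (r ^ (1/2 : ℝ)) := by
    have hbd : ∀ u ∈ T \ Ioc (b - r) b,
        ENNReal.ofReal ((b - u) ^ (-(1/2) : ℝ)) ≤ ENNReal.ofReal (r ^ (-(1/2) : ℝ)) := by
      intro u hu
      apply ENNReal.ofReal_le_ofReal
      have h1 : u < b := hsub hu.1
      have h2 : r ≤ b - u := by
        by_contra hcon
        exact hu.2 ⟨by linarith, h1.le⟩
      exact Real.rpow_le_rpow_of_nonpos hrpos h2 (by norm_num)
    calc (∫⁻ u in T \ Ioc (b - r) b, ENNReal.ofReal ((b - u) ^ (-(1/2) : ℝ)))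
        ≤ ∫⁻ _ in T \ Ioc (b - r) b, ENNReal.ofReal (r ^ (-(1/2) : ℝ)) :=
          setLIntegral_mono' (hT.diff measurableSet_Ioc) hbd
      _ = ENNReal.ofReal (r ^ (-(1/2) : ℝ)) * volume (T \ Ioc (b - r) b) :=
          setLIntegral_const _ _
      _ ≤ ENNReal.ofReal (r ^ (-(1/2) : ℝ)) * ENNReal.ofReal r := by
          gcongr
          rw [← hmr]
          exact measure_mono diff_subset
      _ = ENNReal.ofReal (r ^ (-(1/2) : ℝ) * r) :=
          (ENNReal.ofReal_mul (Real.rpow_nonneg hrpos.le _)).symm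
      _ = ENNReal.ofReal (r ^ (1/2 : ℝ)) := by
          congr 1
          have h := (Real.rpow_add hrpos (-(1/2)) 1).symm
          rw [Real.rpow_one] at h
          rw [h]
          norm_num
  calc (∫⁻ u in T, ENNReal.ofReal ((b - u) ^ (-(1/2) : ℝ)))
      = (∫⁻ u in T ∩ Ioc (b - r) b, ENNReal.ofReal ((b - u) ^ (-(1/2) : ℝ)))
        + ∫⁻ u in T \ Ioc (b - r) b, ENNReal.ofReal ((b - u) ^ (-(1/2) : ℝ)) := hsplit.symm
    _ ≤ ENNReal.ofReal (2 * r ^ (1/2 : ℝ)) + ENNReal.ofReal (r ^ (1/2 : ℝ)) :=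
        add_le_add hpart1 hpart2
    _ = ENNReal.ofReal (3 * r ^ (1/2 : ℝ)) := by
        rw [← ENNReal.ofReal_add (by positivity) (by positivity)]
        ring_nf
    _ = 3 * (volume T) ^ (1/2 : ℝ) := by
        rw [hmr, ENNReal.ofReal_rpow_of_pos hrpos,
          ENNReal.ofReal_mul (by norm_num), ENNReal.ofReal_ofNat]

private lemma key_bound (a b : ℝ) (hab : a < b) (T : Set ℝ) (hT : MeasurableSet T)
    (hsub : T ⊆ Ioo a b) :
    ∫⁻ u in T, ENNReal.ofReal (((u - a) * (b - u)) ^ (-(1/2) : ℝ)) ≤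
      12 * (volume T / ENNReal.ofReal (b - a)) ^ (1/2 : ℝ) := by
  set M := (a + b) / 2 with hM
  set L := b - a with hL
  have hLpos : 0 < L := sub_pos.mpr hab
  have hfin : volume T ≠ ⊤ := by
    refine ne_top_of_le_ne_top ?_ (measure_mono hsub)
    simp [Real.volume_Ioo]
  have hsplit := lintegral_inter_add_diff (μ := volume)
    (fun u => ENNReal.ofReal (((u - a) * (b - u)) ^ (-(1/2) : ℝ))) T
    (measurableSet_Ioc (a := a) (b := M))
  -- pointwise bounds
  have hptL : ∀ u ∈ T ∩ Ioc a M,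
      ENNReal.ofReal (((u - a) * (b - u)) ^ (-(1/2) : ℝ)) ≤
        ENNReal.ofReal ((L/2) ^ (-(1/2) : ℝ)) * ENNReal.ofReal ((u - a) ^ (-(1/2) : ℝ)) := by
    intro u hu
    have huT := hu.1
    have hua := hu.2.1
    have huM := hu.2.2
    have hub : u < b := (hsub huT).2
    have h1 : (0:ℝ) < (u - a) * (L/2) := by
      apply mul_pos <;> [linarith; linarith]
    have h2 : (u - a) * (L/2) ≤ (u - a) * (b - u) := by
      apply mul_le_mul_of_nonneg_left _ (by linarith)
      simp only [hL, hM] at *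
      linarith
    calc ENNReal.ofReal (((u - a) * (b - u)) ^ (-(1/2) : ℝ))
        ≤ ENNReal.ofReal (((u - a) * (L/2)) ^ (-(1/2) : ℝ)) :=
          ENNReal.ofReal_le_ofReal (Real.rpow_le_rpow_of_nonpos h1 h2 (by norm_num))
      _ = ENNReal.ofReal ((L/2) ^ (-(1/2) : ℝ)) * ENNReal.ofReal ((u - a) ^ (-(1/2) : ℝ)) := by
          rw [mul_comm (u - a) (L/2), Real.mul_rpow (by linarith) (by linarith),
            ENNReal.ofReal_mul (Real.rpow_nonneg (by linarith) _)]
  have hptR : ∀ u ∈ T \ Ioc a M,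
      ENNReal.ofReal (((u - a) * (b - u)) ^ (-(1/2) : ℝ)) ≤
        ENNReal.ofReal ((L/2) ^ (-(1/2) : ℝ)) * ENNReal.ofReal ((b - u) ^ (-(1/2) : ℝ)) := by
    intro u hu
    have hua : a < u := (hsub hu.1).1
    have hub : u < b := (hsub hu.1).2
    have huM : M < u := by
      by_contra hcon
      exact hu.2 ⟨hua, by linarith⟩
    have h1 : (0:ℝ) < (L/2) * (b - u) := by
      apply mul_pos <;> [linarith; linarith]
    have h2 : (L/2) * (b - u) ≤ (u - a) * (b - u) := by
      apply mul_le_mul_of_nonneg_right _ (by linarith)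
      simp only [hL, hM] at *
      linarith
    calc ENNReal.ofReal (((u - a) * (b - u)) ^ (-(1/2) : ℝ))
        ≤ ENNReal.ofReal (((L/2) * (b - u)) ^ (-(1/2) : ℝ)) :=
          ENNReal.ofReal_le_ofReal (Real.rpow_le_rpow_of_nonpos h1 h2 (by norm_num))
      _ = ENNReal.ofReal ((L/2) ^ (-(1/2) : ℝ)) * ENNReal.ofReal ((b - u) ^ (-(1/2) : ℝ)) := by
          rw [Real.mul_rpow (by linarith) (by linarith),
            ENNReal.ofReal_mul (Real.rpow_nonneg (by linarith) _)]
  -- each piece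
  have hconst_ne_top : ENNReal.ofReal ((L/2) ^ (-(1/2) : ℝ)) ≠ ⊤ := ENNReal.ofReal_ne_top
  have hpieceL : (∫⁻ u in T ∩ Ioc a M, ENNReal.ofReal (((u - a) * (b - u)) ^ (-(1/2) : ℝ)))
      ≤ ENNReal.ofReal ((L/2) ^ (-(1/2) : ℝ)) * (3 * (volume T) ^ (1/2 : ℝ)) := by
    calc (∫⁻ u in T ∩ Ioc a M, ENNReal.ofReal (((u - a) * (b - u)) ^ (-(1/2) : ℝ)))
        ≤ ∫⁻ u in T ∩ Ioc a M,
            ENNReal.ofReal ((L/2) ^ (-(1/2) : ℝ)) * ENNReal.ofReal ((u - a) ^ (-(1/2) : ℝ)) :=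
          setLIntegral_mono' (hT.inter measurableSet_Ioc) hptL
      _ = ENNReal.ofReal ((L/2) ^ (-(1/2) : ℝ)) *
            ∫⁻ u in T ∩ Ioc a M, ENNReal.ofReal ((u - a) ^ (-(1/2) : ℝ)) := by
          rw [lintegral_const_mul']
          exact hconst_ne_top
      _ ≤ ENNReal.ofReal ((L/2) ^ (-(1/2) : ℝ)) * (3 * (volume (T ∩ Ioc a M)) ^ (1/2 : ℝ)) := by
          gcongr
          exact half_bound_left a _ (hT.inter measurableSet_Ioc)
            (fun u hu => (hsub hu.1).1) (ne_top_of_le_ne_top hfin (measure_mono inter_subset_left))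
      _ ≤ ENNReal.ofReal ((L/2) ^ (-(1/2) : ℝ)) * (3 * (volume T) ^ (1/2 : ℝ)) := by
          gcongr
          exact inter_subset_left
  have hpieceR : (∫⁻ u in T \ Ioc a M, ENNReal.ofReal (((u - a) * (b - u)) ^ (-(1/2) : ℝ)))
      ≤ ENNReal.ofReal ((L/2) ^ (-(1/2) : ℝ)) * (3 * (volume T) ^ (1/2 : ℝ)) := by
    calc (∫⁻ u in T \ Ioc a M, ENNReal.ofReal (((u - a) * (b - u)) ^ (-(1/2) : ℝ)))
        ≤ ∫⁻ u in T \ Ioc a M,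
            ENNReal.ofReal ((L/2) ^ (-(1/2) : ℝ)) * ENNReal.ofReal ((b - u) ^ (-(1/2) : ℝ)) :=
          setLIntegral_mono' (hT.diff measurableSet_Ioc) hptR
      _ = ENNReal.ofReal ((L/2) ^ (-(1/2) : ℝ)) *
            ∫⁻ u in T \ Ioc a M, ENNReal.ofReal ((b - u) ^ (-(1/2) : ℝ)) := by
          rw [lintegral_const_mul']
          exact hconst_ne_top
      _ ≤ ENNReal.ofReal ((L/2) ^ (-(1/2) : ℝ)) * (3 * (volume (T \ Ioc a M)) ^ (1/2 : ℝ)) := by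
          gcongr
          exact half_bound_right b _ (hT.diff measurableSet_Ioc)
            (fun u hu => (hsub hu.1).2) (ne_top_of_le_ne_top hfin (measure_mono diff_subset))
      _ ≤ ENNReal.ofReal ((L/2) ^ (-(1/2) : ℝ)) * (3 * (volume T) ^ (1/2 : ℝ)) := by
          gcongr
          exact diff_subset
  -- constant comparison : ofReal ((L/2)^(-1/2)) ≤ 2 * (ofReal L)^(-1/2)
  have hconst : ENNReal.ofReal ((L/2) ^ (-(1/2) : ℝ)) ≤
      2 * ENNReal.ofReal L ^ (-(1/2) : ℝ) := by
    have hreal : (L/2) ^ (-(1/2) : ℝ) ≤ 2 * L ^ (-(1/2) : ℝ) := by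
      have h1 : (L/2) ^ (-(1/2) : ℝ) = L ^ (-(1/2) : ℝ) * (1/2 : ℝ) ^ (-(1/2) : ℝ) := by
        rw [div_eq_mul_inv, ← Real.mul_rpow hLpos.le (by norm_num)]
        norm_num
      have h2 : ((1:ℝ)/2) ^ (-(1/2) : ℝ) = (2:ℝ) ^ (1/2 : ℝ) := by
        rw [one_div, Real.inv_rpow (by norm_num), ← Real.rpow_neg (by norm_num), neg_neg]
      have h3 : (2:ℝ) ^ (1/2 : ℝ) ≤ 2 := by
        calc (2:ℝ) ^ (1/2 : ℝ) ≤ (2:ℝ) ^ (1 : ℝ) :=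
            Real.rpow_le_rpow_of_exponent_le one_le_two (by norm_num)
          _ = 2 := Real.rpow_one 2
      rw [h1, h2]
      calc L ^ (-(1/2) : ℝ) * (2:ℝ) ^ (1/2 : ℝ) ≤ L ^ (-(1/2) : ℝ) * 2 :=
          mul_le_mul_of_nonneg_left h3 (Real.rpow_nonneg hLpos.le _)
        _ = 2 * L ^ (-(1/2) : ℝ) := mul_comm _ _
    calc ENNReal.ofReal ((L/2) ^ (-(1/2) : ℝ)) ≤ ENNReal.ofReal (2 * L ^ (-(1/2) : ℝ)) :=
        ENNReal.ofReal_le_ofReal hreal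
      _ = 2 * ENNReal.ofReal L ^ (-(1/2) : ℝ) := by
        rw [ENNReal.ofReal_mul (by norm_num), ENNReal.ofReal_ofNat,
          ENNReal.ofReal_rpow_of_pos hLpos]
  -- combine
  have hmain : (∫⁻ u in T, ENNReal.ofReal (((u - a) * (b - u)) ^ (-(1/2) : ℝ)))
      ≤ 12 * (ENNReal.ofReal L ^ (-(1/2) : ℝ) * (volume T) ^ (1/2 : ℝ)) := by
    calc (∫⁻ u in T, ENNReal.ofReal (((u - a) * (b - u)) ^ (-(1/2) : ℝ)))
        = (∫⁻ u in T ∩ Ioc a M, ENNReal.ofReal (((u - a) * (b - u)) ^ (-(1/2) : ℝ)))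
          + ∫⁻ u in T \ Ioc a M, ENNReal.ofReal (((u - a) * (b - u)) ^ (-(1/2) : ℝ)) :=
          hsplit.symm
      _ ≤ ENNReal.ofReal ((L/2) ^ (-(1/2) : ℝ)) * (3 * (volume T) ^ (1/2 : ℝ))
          + ENNReal.ofReal ((L/2) ^ (-(1/2) : ℝ)) * (3 * (volume T) ^ (1/2 : ℝ)) :=
          add_le_add hpieceL hpieceR
      _ = ENNReal.ofReal ((L/2) ^ (-(1/2) : ℝ)) * (6 * (volume T) ^ (1/2 : ℝ)) := by
          rw [← two_mul]; ring
      _ ≤ (2 * ENNReal.ofReal L ^ (-(1/2) : ℝ)) * (6 * (volume T) ^ (1/2 : ℝ)) := by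
          gcongr
      _ = 12 * (ENNReal.ofReal L ^ (-(1/2) : ℝ) * (volume T) ^ (1/2 : ℝ)) := by
          ring
  refine hmain.trans (le_of_eq ?_)
  congr 1
  rw [ENNReal.div_rpow_of_nonneg _ _ (by norm_num : (0:ℝ) ≤ 1/2),
    ENNReal.rpow_neg, div_eq_mul_inv, mul_comm]
  rw [div_eq_mul_inv]

theorem sqrt_kernel_bound :
    ∃ C : ℝ≥0, ∀ A B : ℝ, 0 ≤ A → A < B → ∀ S : Set ℝ, MeasurableSet S → S ⊆ Ioo A B →
      (∫⁻ z in S, ENNReal.ofReal (((z ^ 2 - A ^ 2) * (B ^ 2 - z ^ 2)) ^ (-(1 / 2 : ℝ)) * z)) ≤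
        C * ((∫⁻ z in S, ENNReal.ofReal z) / ENNReal.ofReal (B ^ 2 - A ^ 2))
          ^ (1 / 2 : ℝ) := by
  refine ⟨16, ?_⟩
  intro A B hA hAB S hS hsub
  have hsq : A ^ 2 < B ^ 2 := by nlinarith
  set T : Set ℝ := Real.sqrt ⁻¹' S ∩ Ioo (A ^ 2) (B ^ 2) with hTdef
  have hTm : MeasurableSet T :=
    (Real.continuous_sqrt.measurable hS).inter measurableSet_Ioo
  have hTsub : T ⊆ Ioo (A ^ 2) (B ^ 2) := inter_subset_right
  have hTimg : (fun z : ℝ => z ^ 2) '' S = T := by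
    ext u
    constructor
    · rintro ⟨z, hzS, rfl⟩
      obtain ⟨h1, h2⟩ := hsub hzS
      have hz0 : 0 < z := lt_of_le_of_lt hA h1
      refine ⟨?_, ?_, ?_⟩
      · show Real.sqrt (z ^ 2) ∈ S
        rw [Real.sqrt_sq hz0.le]
        exact hzS
      · show A ^ 2 < z ^ 2
        nlinarith
      · show z ^ 2 < B ^ 2
        nlinarith
    · rintro ⟨h1, h2, h3⟩
      have hu0 : 0 ≤ u := le_trans (by positivity) h2.le
      exact ⟨Real.sqrt u, h1, Real.sq_sqrt hu0⟩
  have hderiv : ∀ z ∈ S, HasDerivWithinAt (fun z : ℝ => z ^ 2) (2 * z) S z := by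
    intro z _
    simpa using (hasDerivAt_pow 2 z).hasDerivWithinAt
  have hinj : InjOn (fun z : ℝ => z ^ 2) S := by
    intro x hx y hy h
    have hx0 : 0 < x := lt_of_le_of_lt hA (hsub hx).1
    have hy0 : 0 < y := lt_of_le_of_lt hA (hsub hy).1
    simp only at h
    nlinarith
  -- change of variables for the kernel integral
  have h1 := my_lintegral_image hS hderiv hinj
    (fun u => ENNReal.ofReal (((u - A ^ 2) * (B ^ 2 - u)) ^ (-(1/2) : ℝ)))
  rw [hTimg] at h1
  have h1' : (∫⁻ u in T, ENNReal.ofReal (((u - A ^ 2) * (B ^ 2 - u)) ^ (-(1/2) : ℝ)))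
      = 2 * ∫⁻ z in S,
          ENNReal.ofReal (((z ^ 2 - A ^ 2) * (B ^ 2 - z ^ 2)) ^ (-(1 / 2 : ℝ)) * z) := by
    rw [h1, ← lintegral_const_mul' _ _ (by norm_num : (2 : ℝ≥0∞) ≠ ⊤)]
    apply setLIntegral_congr_fun hS
    intro z hz
    dsimp only
    have hz0 : 0 < z := lt_of_le_of_lt hA (hsub hz).1
    have habs : |2 * z| = 2 * z := abs_of_nonneg (by linarith)
    have hk : 0 ≤ ((z ^ 2 - A ^ 2) * (B ^ 2 - z ^ 2)) ^ (-(1 / 2 : ℝ)) := by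
      apply Real.rpow_nonneg
      have h1 := (hsub hz).1
      have h2 := (hsub hz).2
      have e1 : (0:ℝ) < z ^ 2 - A ^ 2 := by nlinarith
      have e2 : (0:ℝ) < B ^ 2 - z ^ 2 := by nlinarith
      nlinarith [mul_pos e1 e2]
    rw [habs, ← ENNReal.ofReal_mul (by linarith : (0:ℝ) ≤ 2 * z),
      show (2:ℝ≥0∞) = ENNReal.ofReal 2 from (ENNReal.ofReal_ofNat 2).symm,
      ← ENNReal.ofReal_mul (by norm_num : (0:ℝ) ≤ 2)]
    congr 1
    ring
  -- change of variables for the measure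
  have h2 := my_lintegral_image hS hderiv hinj 1
  rw [hTimg] at h2
  simp only [Pi.one_apply, mul_one] at h2
  have h2' : volume T = 2 * ∫⁻ z in S, ENNReal.ofReal z := by
    rw [← setLIntegral_one, h2, ← lintegral_const_mul' _ _ (by norm_num : (2 : ℝ≥0∞) ≠ ⊤)]
    apply setLIntegral_congr_fun hS
    intro z hz
    dsimp only
    have hz0 : 0 < z := lt_of_le_of_lt hA (hsub hz).1
    have habs : |2 * z| = 2 * z := abs_of_nonneg (by linarith)
    rw [habs, ENNReal.ofReal_mul (by norm_num : (0:ℝ) ≤ 2), ENNReal.ofReal_ofNat]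
  -- apply key bound
  have hk := key_bound (A ^ 2) (B ^ 2) hsq T hTm hTsub
  rw [h1', h2'] at hk
  set m := ∫⁻ z in S, ENNReal.ofReal z with hm
  set D := ENNReal.ofReal (B ^ 2 - A ^ 2) with hD
  -- (2 * m / D) ^ (1/2) ≤ 2 * (m / D) ^ (1/2)
  have hr2 : ((2 : ℝ≥0∞) * m / D) ^ (1/2 : ℝ) ≤ 2 * (m / D) ^ (1/2 : ℝ) := by
    rw [mul_div_assoc, ENNReal.mul_rpow_of_nonneg _ _ (by norm_num : (0:ℝ) ≤ 1/2)]
    gcongr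
    calc (2 : ℝ≥0∞) ^ (1/2 : ℝ) ≤ (2 : ℝ≥0∞) ^ (1 : ℝ) :=
        ENNReal.rpow_le_rpow_of_exponent_le (by norm_num) (by norm_num)
      _ = 2 := ENNReal.rpow_one 2
  have hfinal : 2 * (∫⁻ z in S,
        ENNReal.ofReal (((z ^ 2 - A ^ 2) * (B ^ 2 - z ^ 2)) ^ (-(1 / 2 : ℝ)) * z))
      ≤ 2 * (16 * (m / D) ^ (1/2 : ℝ)) := by
    calc 2 * (∫⁻ z in S,
          ENNReal.ofReal (((z ^ 2 - A ^ 2) * (B ^ 2 - z ^ 2)) ^ (-(1 / 2 : ℝ)) * z))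
        ≤ 12 * ((2 * m / D) ^ (1/2 : ℝ)) := hk
      _ ≤ 12 * (2 * (m / D) ^ (1/2 : ℝ)) := by gcongr
      _ = 24 * (m / D) ^ (1/2 : ℝ) := by ring
      _ ≤ 32 * (m / D) ^ (1/2 : ℝ) := by gcongr <;> norm_num
      _ = 2 * (16 * (m / D) ^ (1/2 : ℝ)) := by ring
  have := (ENNReal.mul_le_mul_iff_right (by norm_num : (2:ℝ≥0∞) ≠ 0)
    (by norm_num : (2:ℝ≥0∞) ≠ ⊤)).mp hfinal
  calc (∫⁻ z in S, ENNReal.ofReal (((z ^ 2 - A ^ 2) * (B ^ 2 - z ^ 2)) ^ (-(1 / 2 : ℝ)) * z))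
      ≤ 16 * (m / D) ^ (1/2 : ℝ) := this
    _ = ((16 : ℝ≥0) : ℝ≥0∞) * (m / D) ^ (1/2 : ℝ) := by norm_num
end
end
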